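/- Let K be a totally ordered division ring, let m, n ≥ 1, and let M be an m × n matrix with entries in K. Then there exist k ≥ 1 and a k × m matrix S with entries in K such that for every partially ordered right K-vector space E satisfying the interpolation property, the solution set {X ∈ M_{1,m}(E⁺) | XM ≥ 0} equals {YS | Y ∈ M_{1,k}(E⁺)}, where E⁺ = {x ∈ E | 0 ≤ x} and matrix inequalities are entrywise. -/

import Mathlib

namespace EHSAux

universe v

section Klem
variable {K : Type*} [DivisionRing K] [LinearOrder K]

lemma k_neg_nonneg (haddK : ∀ a b : K, a ≤ b → ∀ c : K, a + c ≤ b + c)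
    {a : K} (ha : a ≤ 0) : 0 ≤ -a := by
  simpa using haddK a 0 ha (-a)

lemma k_one_nonneg (haddK : ∀ a b : K, a ≤ b → ∀ c : K, a + c ≤ b + c)
    (hmulK : ∀ a b : K, 0 ≤ a → 0 ≤ b → 0 ≤ a * b) : (0:K) ≤ 1 := by
  rcases le_total (0:K) 1 with h | h
  · exact h
  · have h1 : (0:K) ≤ -1 := k_neg_nonneg haddK h
    have := hmulK _ _ h1 h1
    simpa using this

lemma k_add_nonneg (haddK : ∀ a b : K, a ≤ b → ∀ c : K, a + c ≤ b + c)
    {a b : K} (ha : 0 ≤ a) (hb : 0 ≤ b) : 0 ≤ a + b := by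
  have := haddK 0 b hb a
  rw [zero_add] at this
  calc (0:K) ≤ a := ha
  _ ≤ b + a := this
  _ = a + b := add_comm b a

lemma k_inv_nonneg (haddK : ∀ a b : K, a ≤ b → ∀ c : K, a + c ≤ b + c)
    (hmulK : ∀ a b : K, 0 ≤ a → 0 ≤ b → 0 ≤ a * b)
    {a : K} (ha : 0 < a) : 0 ≤ a⁻¹ := by
  rcases le_total 0 a⁻¹ with h | h
  · exact h
  · exfalso
    have h1 : (0:K) ≤ -a⁻¹ := k_neg_nonneg haddK h
    have h2 : (0:K) ≤ a * (-a⁻¹) := hmulK _ _ ha.le h1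
    rw [mul_neg, mul_inv_cancel₀ ha.ne'] at h2
    have h3 : (1:K) ≤ 0 := by simpa using haddK 0 (-1) h2 1
    have := lt_of_lt_of_le (lt_of_le_of_ne (k_one_nonneg haddK hmulK) (one_ne_zero).symm) h3
    exact lt_irrefl _ this

end Klem

/-- Bundled partially ordered right `K`-vector space with interpolation. -/
structure RSdata (K : Type*) [DivisionRing K] [LinearOrder K] (E : Type v)
    [AddCommGroup E] [PartialOrder E] [IsOrderedAddMonoid E] where
  sm : E → K → E
  add_sm : ∀ (a b : E) (r : K), sm (a + b) r = sm a r + sm b r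
  sm_add : ∀ (a : E) (r s : K), sm a (r + s) = sm a r + sm a s
  sm_mul : ∀ (a : E) (r s : K), sm a (r * s) = sm (sm a r) s
  sm_one : ∀ a : E, sm a 1 = a
  smul_nonneg : ∀ (a : E) (r : K), 0 ≤ a → 0 ≤ r → 0 ≤ sm a r
  interp : ∀ a₀ a₁ b₀ b₁ : E, a₀ ≤ b₀ → a₀ ≤ b₁ → a₁ ≤ b₀ → a₁ ≤ b₁ →
    ∃ x : E, a₀ ≤ x ∧ a₁ ≤ x ∧ x ≤ b₀ ∧ x ≤ b₁

namespace RSdata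

variable {K : Type*} [DivisionRing K] [LinearOrder K]
variable {E : Type v} [AddCommGroup E] [PartialOrder E] [IsOrderedAddMonoid E] (G : RSdata K E)
include G

lemma sm_zero_right (a : E) : G.sm a 0 = 0 := by
  have h : G.sm a 0 + G.sm a 0 = G.sm a 0 + 0 := by
    rw [← G.sm_add, add_zero, add_zero]
  exact add_left_cancel h

lemma sm_zero_left (r : K) : G.sm 0 r = 0 := by
  have h : G.sm 0 r + G.sm 0 r = G.sm 0 r + 0 := by
    rw [← G.add_sm, add_zero, add_zero]
  exact add_left_cancel h

lemma sm_neg_right (a : E) (r : K) : G.sm a (-r) = -(G.sm a r) := by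
  have h : G.sm a r + G.sm a (-r) = 0 := by
    rw [← G.sm_add, add_neg_cancel, G.sm_zero_right]
  exact eq_neg_of_add_eq_zero_right h

lemma sum_sm {ι : Type*} (s : Finset ι) (x : ι → E) (r : K) :
    G.sm (∑ i ∈ s, x i) r = ∑ i ∈ s, G.sm (x i) r := by
  classical
  induction s using Finset.induction_on with
  | empty => simp [G.sm_zero_left]
  | insert a s' h ih => rw [Finset.sum_insert h, Finset.sum_insert h, G.add_sm, ih]

lemma sm_sum {ι : Type*} (s : Finset ι) (a : E) (r : ι → K) :
    G.sm a (∑ i ∈ s, r i) = ∑ i ∈ s, G.sm a (r i) := by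
  classical
  induction s using Finset.induction_on with
  | empty => simp [G.sm_zero_right]
  | insert i s' h ih => rw [Finset.sum_insert h, Finset.sum_insert h, G.sm_add, ih]

lemma riesz1 {ι : Type*} [DecidableEq ι] (s : Finset ι) (a : ι → E) (c : E)
    (ha : ∀ i ∈ s, 0 ≤ a i) (hc : 0 ≤ c) (hca : c ≤ ∑ i ∈ s, a i) :
    ∃ d : ι → E, (∀ i, 0 ≤ d i) ∧ (∀ i ∈ s, d i ≤ a i) ∧ c = ∑ i ∈ s, d i := by
  induction s using Finset.induction_on generalizing c with
  | empty =>
    exact ⟨fun _ => 0, fun _ => le_rfl, fun i h => absurd h (Finset.notMem_empty i),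
      by simpa using le_antisymm (by simpa using hca) hc⟩
  | insert x s' hx ih =>
    have hax : 0 ≤ a x := ha x (Finset.mem_insert_self _ _)
    have has' : ∀ i ∈ s', 0 ≤ a i := fun i hi => ha i (Finset.mem_insert_of_mem hi)
    have hsum : 0 ≤ ∑ i ∈ s', a i := Finset.sum_nonneg has'
    rw [Finset.sum_insert hx] at hca
    obtain ⟨w, hw0, hw1, hwc, hwa⟩ :=
      G.interp 0 (c - ∑ i ∈ s', a i) c (a x) hc hax
        (by simpa using sub_le_self c hsum)
        (by rwa [sub_le_iff_le_add])
    obtain ⟨d', hd0, hd1, hd2⟩ := ih (c - w) has' (sub_nonneg.2 hwc) (by rwa [sub_le_comm])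
    refine ⟨Function.update d' x w, ?_, ?_, ?_⟩
    · intro i
      rcases eq_or_ne i x with rfl | hix
      · simpa using hw0
      · simpa [Function.update_of_ne hix] using hd0 i
    · intro i hi
      rcases Finset.mem_insert.mp hi with rfl | hi'
      · simpa using hwa
      · have : i ≠ x := ne_of_mem_of_not_mem hi' hx
        simpa [Function.update_of_ne this] using hd1 i hi'
    · rw [Finset.sum_insert hx, Function.update_self,
        Finset.sum_congr rfl (fun i hi => Function.update_of_ne (ne_of_mem_of_not_mem hi hx) _ _),
        ← hd2]
      abel

lemma riesz2 {ι ι' : Type*} [DecidableEq ι'] (s : Finset ι) [DecidableEq ι] (t : Finset ι')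
    (a : ι → E) (c : ι' → E)
    (ha : ∀ i ∈ s, 0 ≤ a i) (hc : ∀ j ∈ t, 0 ≤ c j)
    (h : ∑ j ∈ t, c j ≤ ∑ i ∈ s, a i) :
    ∃ y : ι' → ι → E, (∀ j i, 0 ≤ y j i) ∧ (∀ j ∈ t, c j = ∑ i ∈ s, y j i) ∧
      (∀ i ∈ s, ∑ j ∈ t, y j i ≤ a i) := by
  induction t using Finset.induction_on generalizing a with
  | empty =>
    exact ⟨fun _ _ => 0, fun _ _ => le_rfl, fun j hj => absurd hj (Finset.notMem_empty j),
      fun i hi => by simpa using ha i hi⟩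
  | insert j t' hj ih =>
    have hcj : 0 ≤ c j := hc j (Finset.mem_insert_self _ _)
    have hct' : ∀ j' ∈ t', 0 ≤ c j' := fun j' hj' => hc j' (Finset.mem_insert_of_mem hj')
    rw [Finset.sum_insert hj] at h
    have hsumc : 0 ≤ ∑ j' ∈ t', c j' := Finset.sum_nonneg hct'
    have hcja : c j ≤ ∑ i ∈ s, a i := le_trans (le_add_of_nonneg_right hsumc) h
    obtain ⟨d, hd0, hd1, hd2⟩ := G.riesz1 s a (c j) ha hcj hcja
    have ha' : ∀ i ∈ s, 0 ≤ a i - d i := fun i hi => sub_nonneg.2 (hd1 i hi)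
    have h' : ∑ j' ∈ t', c j' ≤ ∑ i ∈ s, (a i - d i) := by
      rw [Finset.sum_sub_distrib, ← hd2]
      exact le_sub_iff_add_le'.mpr h
    obtain ⟨y', hy0, hy1, hy2⟩ := ih (fun i => a i - d i) ha' hct' h'
    refine ⟨Function.update y' j d, ?_, ?_, ?_⟩
    · intro j' i
      rcases eq_or_ne j' j with rfl | hne
      · simpa using hd0 i
      · simpa [Function.update_of_ne hne] using hy0 j' i
    · intro j' hj'
      rcases Finset.mem_insert.mp hj' with rfl | hj''
      · simpa using hd2
      · have : j' ≠ j := ne_of_mem_of_not_mem hj'' hj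
        simpa [Function.update_of_ne this] using hy1 j' hj''
    · intro i hi
      rw [Finset.sum_insert hj, Function.update_self]
      have hsumeq : ∑ x ∈ t', Function.update y' j d x i = ∑ x ∈ t', y' x i :=
        Finset.sum_congr rfl (fun j' hj' => by
          rw [Function.update_of_ne (ne_of_mem_of_not_mem hj' hj)])
      rw [hsumeq]
      have := hy2 i hi
      have h3 := add_le_add_right this (d i)
      calc d i + ∑ j' ∈ t', y' j' i ≤ d i + (a i - d i) := h3
      _ = a i := by abel

lemma dot_mulVec {ι κ : Type*} [Fintype ι] [Fintype κ] (X : ι → E) (A : ι → κ → K)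
    (w : κ → K) :
    ∑ j, G.sm (∑ i, G.sm (X i) (A i j)) (w j) = ∑ i, G.sm (X i) (∑ j, A i j * w j) := by
  simp_rw [G.sum_sm, G.sm_sum, ← G.sm_mul]
  exact Finset.sum_comm

end RSdata

section Row
variable {K : Type*} [DivisionRing K] [LinearOrder K]

lemma k_neg_pos (haddK : ∀ a b : K, a ≤ b → ∀ c : K, a + c ≤ b + c)
    {a : K} (ha : a < 0) : 0 < -a :=
  lt_of_le_of_ne (k_neg_nonneg haddK ha.le) (Ne.symm (neg_ne_zero.mpr ha.ne))

/-- Generator rows for a single inequality with coefficient vector `v`. -/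
def rowOf {m : ℕ} (v : Fin m → K) (p : Fin m × Fin m) (t : Fin m) : K :=
  if p.1 = p.2 then
    (if t = p.1 then (if v p.1 = 0 then 1 else if 0 < v p.1 then (v p.1)⁻¹ else 0) else 0)
  else if 0 < v p.1 ∧ v p.2 < 0 then
    (if t = p.1 then (v p.1)⁻¹ else if t = p.2 then (-(v p.2))⁻¹ else 0)
  else 0

lemma rowOf_nonneg (haddK : ∀ a b : K, a ≤ b → ∀ c : K, a + c ≤ b + c)
    (hmulK : ∀ a b : K, 0 ≤ a → 0 ≤ b → 0 ≤ a * b)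
    {m : ℕ} (v : Fin m → K) (p : Fin m × Fin m) (t : Fin m) : 0 ≤ rowOf v p t := by
  unfold rowOf
  split_ifs with h1 h2 h3 h4 h5 h6 h7
  · exact k_one_nonneg haddK hmulK
  · exact k_inv_nonneg haddK hmulK h4
  · exact le_rfl
  · exact le_rfl
  · exact k_inv_nonneg haddK hmulK h5.1
  · exact k_inv_nonneg haddK hmulK (k_neg_pos haddK h5.2)
  · exact le_rfl
  · exact le_rfl

lemma dot_ite {m : ℕ} (v : Fin m → K) (i : Fin m) (C : K) :
    ∑ t, (if t = i then C else 0) * v t = C * v i := by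
  simp [ite_mul]

lemma rowOf_dot_nonneg (haddK : ∀ a b : K, a ≤ b → ∀ c : K, a + c ≤ b + c)
    (hmulK : ∀ a b : K, 0 ≤ a → 0 ≤ b → 0 ≤ a * b)
    {m : ℕ} (v : Fin m → K) (p : Fin m × Fin m) :
    0 ≤ ∑ t, rowOf v p t * v t := by
  obtain ⟨i, j⟩ := p
  by_cases hij : i = j
  · subst hij
    have hrow : ∀ t, rowOf v (i, i) t =
        if t = i then (if v i = 0 then 1 else if 0 < v i then (v i)⁻¹ else 0) else 0 := by
      intro t; unfold rowOf; simp
    rw [Finset.sum_congr rfl (fun t _ => by rw [hrow t]), dot_ite]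
    by_cases h0 : v i = 0
    · simp [h0]
    by_cases hp : 0 < v i
    · rw [if_neg h0, if_pos hp, inv_mul_cancel₀ (ne_of_gt hp)]
      exact k_one_nonneg haddK hmulK
    · simp [h0, hp]
  · by_cases hcond : 0 < v i ∧ v j < 0
    · have hrow : ∀ t, rowOf v (i, j) t =
          (if t = i then (v i)⁻¹ else 0) + (if t = j then (-(v j))⁻¹ else 0) := by
        intro t; unfold rowOf
        rw [if_neg hij, if_pos hcond]
        by_cases hti : t = i
        · simp [hti, hij]
        · by_cases htj : t = j <;> simp [hti, htj, Ne.symm hij]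
      rw [Finset.sum_congr rfl (fun t _ => by rw [hrow t, add_mul]), Finset.sum_add_distrib,
        dot_ite, dot_ite, inv_mul_cancel₀ (ne_of_gt hcond.1)]
      have hneg : (-(v j))⁻¹ * v j = -1 := by
        calc (-(v j))⁻¹ * v j = -((-(v j))⁻¹ * (-(v j))) := by rw [mul_neg, neg_neg]
        _ = -1 := by rw [inv_mul_cancel₀ (neg_ne_zero.mpr hcond.2.ne)]
      rw [hneg]
      simp
    · have hrow : ∀ t, rowOf v (i, j) t = 0 := by
        intro t; unfold rowOf; rw [if_neg hij, if_neg hcond]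
      rw [Finset.sum_congr rfl (fun t _ => by rw [hrow t, zero_mul])]
      simp

end Row

section Single
variable {K : Type*} [DivisionRing K] [LinearOrder K]

lemma single_column
    (haddK : ∀ a b : K, a ≤ b → ∀ c : K, a + c ≤ b + c)
    (hmulK : ∀ a b : K, 0 ≤ a → 0 ≤ b → 0 ≤ a * b)
    {m : ℕ} (hm : 1 ≤ m) (v : Fin m → K) :
    ∃ k : ℕ, 1 ≤ k ∧ ∃ S : Matrix (Fin k) (Fin m) K,
      ∀ (E : Type v) [AddCommGroup E] [PartialOrder E] [IsOrderedAddMonoid E] (G : RSdata K E),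
        {X : Fin m → E | (∀ i, 0 ≤ X i) ∧ 0 ≤ ∑ i, G.sm (X i) (v i)} =
        {X : Fin m → E | ∃ Y : Fin k → E, (∀ g, 0 ≤ Y g) ∧
            X = fun t => ∑ g, G.sm (Y g) (S g t)} := by
  classical
  refine ⟨m * m, by simpa using Nat.mul_le_mul hm hm,
    (fun g t => rowOf v (finProdFinEquiv.symm g) t), ?_⟩
  intro E _ _ _ G
  ext X
  simp only [Set.mem_setOf_eq]
  constructor
  · -- hard direction: a solution is a nonnegative combination of the generators
    rintro ⟨hX, hdot⟩
    have ha : ∀ i ∈ Finset.univ.filter (fun i => 0 < v i), 0 ≤ G.sm (X i) (v i) :=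
      fun i hi => G.smul_nonneg _ _ (hX i) (Finset.mem_filter.mp hi).2.le
    have hc : ∀ j ∈ Finset.univ.filter (fun j => v j < 0), 0 ≤ G.sm (X j) (-(v j)) :=
      fun j hj => G.smul_nonneg _ _ (hX j)
        (k_neg_nonneg haddK (Finset.mem_filter.mp hj).2.le)
    have hpt : ∀ i : Fin m, G.sm (X i) (v i) =
        (if 0 < v i then G.sm (X i) (v i) else 0)
          - (if v i < 0 then G.sm (X i) (-(v i)) else 0) := by
      intro i
      rcases lt_trichotomy (v i) 0 with h | h | h
      · rw [if_neg (asymm h), if_pos h, G.sm_neg_right, zero_sub, neg_neg]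
      · rw [h, G.sm_zero_right, if_neg (lt_irrefl 0), neg_zero, G.sm_zero_right,
          if_neg (lt_irrefl 0), sub_zero]
      · rw [if_pos h, if_neg (asymm h), sub_zero]
    have hkey : ∑ j ∈ Finset.univ.filter (fun j => v j < 0), G.sm (X j) (-(v j))
        ≤ ∑ i ∈ Finset.univ.filter (fun i => 0 < v i), G.sm (X i) (v i) := by
      rw [← sub_nonneg]
      have h1 : (∑ i ∈ Finset.univ.filter (fun i => 0 < v i), G.sm (X i) (v i))
          - (∑ j ∈ Finset.univ.filter (fun j => v j < 0), G.sm (X j) (-(v j)))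
          = ∑ i, G.sm (X i) (v i) := by
        rw [Finset.sum_filter, Finset.sum_filter, ← Finset.sum_sub_distrib]
        exact (Finset.sum_congr rfl (fun i _ => (hpt i).symm))
      rw [h1]; exact hdot
    obtain ⟨y, hy0, hy1, hy2⟩ := G.riesz2 (Finset.univ.filter (fun i => 0 < v i))
      (Finset.univ.filter (fun j => v j < 0))
      (fun i => G.sm (X i) (v i)) (fun j => G.sm (X j) (-(v j))) ha hc hkey
    set W : Fin m × Fin m → E := fun p =>
      if p.1 = p.2 then
        (if v p.1 = 0 then X p.1
         else if 0 < v p.1 then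
           G.sm (X p.1) (v p.1) - ∑ j ∈ Finset.univ.filter (fun j => v j < 0), y j p.1
         else 0)
      else if 0 < v p.1 ∧ v p.2 < 0 then y p.2 p.1 else 0 with hW
    have hW0 : ∀ p, 0 ≤ W p := by
      rintro ⟨i, j⟩
      rw [hW]; dsimp only
      split_ifs with h1 h2 h3 h4
      · exact hX i
      · exact sub_nonneg.2 (hy2 i (Finset.mem_filter.mpr ⟨Finset.mem_univ i, h3⟩))
      · exact le_rfl
      · exact hy0 j i
      · exact le_rfl
    refine ⟨fun g => W (finProdFinEquiv.symm g), fun g => hW0 _, ?_⟩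
    refine funext fun t => ?_
    show X t = ∑ g : Fin (m * m),
      G.sm (W (finProdFinEquiv.symm g)) (rowOf v (finProdFinEquiv.symm g) t)
    rw [Fintype.sum_equiv finProdFinEquiv.symm _
      (fun p => G.sm (W p) (rowOf v p t)) (fun g => rfl)]
    rcases lt_trichotomy (v t) 0 with hvt | hvt | hvt
    · -- v t < 0
      have hptw : ∀ p : Fin m × Fin m, G.sm (W p) (rowOf v p t)
          = if 0 < v p.1 ∧ p.2 = t then G.sm (y t p.1) ((-(v t))⁻¹) else 0 := by
        rintro ⟨i, j⟩
        rw [hW]; unfold rowOf; dsimp only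
        by_cases hij : i = j
        · subst hij
          by_cases hti : t = i
          · subst hti
            simp [hvt.ne, asymm hvt, G.sm_zero_left]
          · have hit : ¬ i = t := fun h => hti h.symm
            simp [hti, hit, G.sm_zero_right]
        · rw [if_neg hij, if_neg hij]
          by_cases hcond : 0 < v i ∧ v j < 0
          · rw [if_pos hcond, if_pos hcond]
            have hti : ¬ t = i := fun h => absurd hcond.1 (by rw [← h]; exact asymm hvt)
            by_cases htj : t = j
            · subst htj
              simp [hti, hcond.1]
            · have hjt : ¬ j = t := fun h => htj h.symm
              simp [hti, htj, hjt, G.sm_zero_right]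
          · have h2 : ¬ (0 < v i ∧ j = t) :=
              fun hcc => hcond ⟨hcc.1, by rw [hcc.2]; exact hvt⟩
            simp [hcond, h2, G.sm_zero_left]
      rw [Finset.sum_congr rfl (fun p _ => hptw p), Fintype.sum_prod_type]
      have hinner : ∀ i : Fin m,
          (∑ j, if 0 < v i ∧ j = t then G.sm (y t i) ((-(v t))⁻¹) else 0)
          = if 0 < v i then G.sm (y t i) ((-(v t))⁻¹) else 0 := by
        intro i
        by_cases hvi : 0 < v i
        · simp [hvi]
        · simp [hvi]
      rw [Finset.sum_congr rfl (fun i _ => hinner i), ← Finset.sum_filter, ← G.sum_sm,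
        ← hy1 t (Finset.mem_filter.mpr ⟨Finset.mem_univ t, hvt⟩)]
      show X t = G.sm (G.sm (X t) (-(v t))) ((-(v t))⁻¹)
      rw [← G.sm_mul, mul_inv_cancel₀ (neg_ne_zero.mpr hvt.ne), G.sm_one]
    · -- v t = 0
      have hptw : ∀ p : Fin m × Fin m, G.sm (W p) (rowOf v p t)
          = if p.1 = t ∧ p.2 = t then X t else 0 := by
        rintro ⟨i, j⟩
        rw [hW]; unfold rowOf; dsimp only
        by_cases hij : i = j
        · subst hij
          by_cases hti : t = i
          · subst hti
            simp [hvt, G.sm_one]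
          · have hit : ¬ i = t := fun h => hti h.symm
            simp [hti, hit, G.sm_zero_right]
        · rw [if_neg hij, if_neg hij]
          by_cases hcond : 0 < v i ∧ v j < 0
          · have hti : ¬ t = i := fun h => absurd hcond.1 (by rw [← h, hvt]; exact lt_irrefl 0)
            have htj : ¬ t = j := fun h => absurd hcond.2 (by rw [← h, hvt]; exact lt_irrefl 0)
            have hit : ¬ i = t := fun h => hti h.symm
            rw [if_pos hcond]
            simp [hti, htj, hit, G.sm_zero_right]
          · have h2 : ¬ (i = t ∧ j = t) := fun hcc => hij (hcc.1.trans hcc.2.symm)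
            simp [hcond, h2, G.sm_zero_left]
      rw [Finset.sum_congr rfl (fun p _ => hptw p),
        Finset.sum_congr rfl (fun p _ =>
          if_congr (Iff.symm (@Prod.ext_iff _ _ p (t, t))) rfl rfl),
        Finset.sum_ite_eq' Finset.univ ((t, t) : Fin m × Fin m)]
      simp
    · -- 0 < v t
      have hptw : ∀ p : Fin m × Fin m, G.sm (W p) (rowOf v p t)
          = (if p.1 = t ∧ p.2 = t then
              G.sm (G.sm (X t) (v t)
                - ∑ j ∈ Finset.univ.filter (fun j => v j < 0), y j t) ((v t)⁻¹) else 0)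
            + (if p.1 = t ∧ v p.2 < 0 then G.sm (y p.2 t) ((v t)⁻¹) else 0) := by
        rintro ⟨i, j⟩
        rw [hW]; unfold rowOf; dsimp only
        by_cases hij : i = j
        · subst hij
          by_cases hti : t = i
          · subst hti
            simp [hvt.ne', hvt, asymm hvt]
          · have hit : ¬ i = t := fun h => hti h.symm
            simp [hti, hit, G.sm_zero_right]
        · rw [if_neg hij, if_neg hij]
          by_cases hcond : 0 < v i ∧ v j < 0
          · rw [if_pos hcond, if_pos hcond]
            have htj : ¬ t = j := fun h => absurd hcond.2 (by rw [← h]; exact asymm hvt)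
            have hjt : ¬ j = t := fun h => htj h.symm
            by_cases hti : t = i
            · subst hti
              simp [hjt, hcond.2]
            · have hit : ¬ i = t := fun h => hti h.symm
              simp [hti, htj, hit, G.sm_zero_right]
          · have h2 : ¬ (i = t ∧ j = t) := fun hcc => hij (hcc.1.trans hcc.2.symm)
            have h3 : ¬ (i = t ∧ v j < 0) :=
              fun hcc => hcond ⟨by rw [hcc.1]; exact hvt, hcc.2⟩
            simp [hcond, h2, h3, G.sm_zero_left]
      rw [Finset.sum_congr rfl (fun p _ => hptw p), Finset.sum_add_distrib]
      have h1 : (∑ p : Fin m × Fin m, if p.1 = t ∧ p.2 = t then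
          G.sm (G.sm (X t) (v t)
            - ∑ j ∈ Finset.univ.filter (fun j => v j < 0), y j t) ((v t)⁻¹) else 0)
          = G.sm (G.sm (X t) (v t)
            - ∑ j ∈ Finset.univ.filter (fun j => v j < 0), y j t) ((v t)⁻¹) := by
        rw [Finset.sum_congr rfl (fun p _ =>
          if_congr (Iff.symm (@Prod.ext_iff _ _ p (t, t))) rfl rfl),
          Finset.sum_ite_eq' Finset.univ ((t, t) : Fin m × Fin m)]
        simp
      have h2 : (∑ p : Fin m × Fin m,
          if p.1 = t ∧ v p.2 < 0 then G.sm (y p.2 t) ((v t)⁻¹) else 0)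
          = ∑ j ∈ Finset.univ.filter (fun j => v j < 0), G.sm (y j t) ((v t)⁻¹) := by
        rw [Fintype.sum_prod_type]
        have hinner : ∀ i : Fin m,
            (∑ j, if i = t ∧ v j < 0 then G.sm (y j t) ((v t)⁻¹) else 0)
            = if i = t then ∑ j ∈ Finset.univ.filter (fun j => v j < 0),
                G.sm (y j t) ((v t)⁻¹) else 0 := by
          intro i
          by_cases hit : i = t
          · simp only [hit, true_and, if_true]
            rw [Finset.sum_filter]
          · simp [hit]
        rw [Finset.sum_congr rfl (fun i _ => hinner i)]
        simp
      rw [h1, h2, ← G.sum_sm, ← G.add_sm, sub_add_cancel, ← G.sm_mul,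
        mul_inv_cancel₀ hvt.ne', G.sm_one]
  · -- easy direction
    rintro ⟨Y, hY, rfl⟩
    constructor
    · intro t
      exact Finset.sum_nonneg fun g _ =>
        G.smul_nonneg _ _ (hY g) (rowOf_nonneg haddK hmulK v _ t)
    · show 0 ≤ ∑ i, G.sm (∑ g, G.sm (Y g) (rowOf v (finProdFinEquiv.symm g) i)) (v i)
      rw [G.dot_mulVec Y (fun g t => rowOf v (finProdFinEquiv.symm g) t) v]
      exact Finset.sum_nonneg fun g _ =>
        G.smul_nonneg _ _ (hY g) (rowOf_dot_nonneg haddK hmulK v _)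

end Single

section Master
variable {K : Type*} [DivisionRing K] [LinearOrder K]

lemma master
    (haddK : ∀ a b : K, a ≤ b → ∀ c : K, a + c ≤ b + c)
    (hmulK : ∀ a b : K, 0 ≤ a → 0 ≤ b → 0 ≤ a * b)
    (n : ℕ) {m : ℕ} (hm : 1 ≤ m) (M : Matrix (Fin m) (Fin n) K) :
    ∃ k : ℕ, 1 ≤ k ∧ ∃ S : Matrix (Fin k) (Fin m) K,
      ∀ (E : Type v) [AddCommGroup E] [PartialOrder E] [IsOrderedAddMonoid E] (G : RSdata K E),
        {X : Fin m → E | (∀ i, 0 ≤ X i) ∧ ∀ j, 0 ≤ ∑ i, G.sm (X i) (M i j)} =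
        {X : Fin m → E | ∃ Y : Fin k → E, (∀ g, 0 ≤ Y g) ∧
            X = fun t => ∑ g, G.sm (Y g) (S g t)} := by
  induction n generalizing m with
  | zero =>
    refine ⟨m, hm, (fun i j => if i = j then 1 else 0), ?_⟩
    intro E _ _ _ G
    ext X
    simp only [Set.mem_setOf_eq]
    constructor
    · rintro ⟨hX, -⟩
      refine ⟨X, hX, ?_⟩
      funext t
      have hpt : ∀ i, G.sm (X i) (if i = t then (1:K) else 0)
          = if i = t then X i else 0 := by
        intro i
        by_cases h : i = t
        · rw [if_pos h, if_pos h, G.sm_one]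
        · rw [if_neg h, if_neg h, G.sm_zero_right]
      rw [Finset.sum_congr rfl (fun i _ => hpt i),
        Finset.sum_ite_eq' Finset.univ t, if_pos (Finset.mem_univ t)]
    · rintro ⟨Y, hY, rfl⟩
      refine ⟨fun t => Finset.sum_nonneg fun g _ => G.smul_nonneg _ _ (hY g)
        (by split_ifs; exacts [k_one_nonneg haddK hmulK, le_rfl]),
        fun j => Fin.elim0 j⟩
  | succ n ih =>
    obtain ⟨k, hk, S, hS⟩ := ih hm (fun i j => M i j.castSucc)
    obtain ⟨k', hk', T, hT⟩ :=
      single_column haddK hmulK hk (fun g => ∑ i, S g i * M i (Fin.last n))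
    refine ⟨k', hk', (fun a t => ∑ g, T a g * S g t), ?_⟩
    intro E _ _ _ G
    ext X
    simp only [Set.mem_setOf_eq]
    constructor
    · rintro ⟨hX, hD⟩
      have hX1 : X ∈ {X : Fin m → E | (∀ i, 0 ≤ X i) ∧
          ∀ j, 0 ≤ ∑ i, G.sm (X i) ((fun i (j : Fin n) => M i j.castSucc) i j)} :=
        ⟨hX, fun j => hD j.castSucc⟩
      rw [hS E G] at hX1
      obtain ⟨Y, hY, hXY⟩ := hX1
      have hXt : ∀ t, X t = ∑ g, G.sm (Y g) (S g t) := fun t => by rw [hXY]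
      have hYsol : Y ∈ {Y : Fin k → E | (∀ g, 0 ≤ Y g) ∧
          0 ≤ ∑ g, G.sm (Y g) ((fun g => ∑ i, S g i * M i (Fin.last n)) g)} := by
        refine ⟨hY, ?_⟩
        show 0 ≤ ∑ g, G.sm (Y g) (∑ i, S g i * M i (Fin.last n))
        rw [← G.dot_mulVec Y S (fun i => M i (Fin.last n))]
        rw [Finset.sum_congr rfl (fun t _ => by rw [← hXt t])]
        exact hD (Fin.last n)
      rw [hT E G] at hYsol
      obtain ⟨Z, hZ, hYZ⟩ := hYsol
      have hYt : ∀ g, Y g = ∑ a, G.sm (Z a) (T a g) := fun g => by rw [hYZ]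
      refine ⟨Z, hZ, ?_⟩
      funext t
      rw [hXt t, Finset.sum_congr rfl (fun g _ => by rw [hYt g])]
      exact G.dot_mulVec Z T (fun g => S g t)
    · rintro ⟨Z, hZ, rfl⟩
      have hXs : (fun t => ∑ a, G.sm (Z a) ((fun a t => ∑ g, T a g * S g t) a t))
          = fun t => ∑ g, G.sm ((fun g => ∑ a, G.sm (Z a) (T a g)) g) (S g t) := by
        funext t
        exact (G.dot_mulVec Z T (fun g => S g t)).symm
      have hYmem : (fun g => ∑ a, G.sm (Z a) (T a g)) ∈
          {Y : Fin k → E | ∃ Z' : Fin k' → E, (∀ a, 0 ≤ Z' a) ∧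
            Y = fun g => ∑ a, G.sm (Z' a) (T a g)} := ⟨Z, hZ, rfl⟩
      rw [← hT E G] at hYmem
      obtain ⟨hY0, hYdot⟩ := hYmem
      have hmem : (fun t => ∑ a, G.sm (Z a) ((fun a t => ∑ g, T a g * S g t) a t)) ∈
          {X : Fin m → E | ∃ Y : Fin k → E, (∀ g, 0 ≤ Y g) ∧
            X = fun t => ∑ g, G.sm (Y g) (S g t)} :=
        ⟨_, hY0, hXs⟩
      rw [← hS E G] at hmem
      obtain ⟨hX0, hcols⟩ := hmem
      refine ⟨hX0, fun j => ?_⟩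
      refine Fin.lastCases ?_ (fun j' => hcols j') j
      have hptx : ∀ i, (∑ a, G.sm (Z a) (∑ g, T a g * S g i))
          = ∑ g, G.sm (∑ a, G.sm (Z a) (T a g)) (S g i) :=
        fun i => (G.dot_mulVec Z T (fun g => S g i)).symm
      show 0 ≤ ∑ i, G.sm (∑ a, G.sm (Z a) (∑ g, T a g * S g i)) (M i (Fin.last n))
      rw [Finset.sum_congr rfl (fun i _ => by rw [hptx i]),
        G.dot_mulVec (fun g => ∑ a, G.sm (Z a) (T a g)) S (fun i => M i (Fin.last n))]
      exact hYdot

end Master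


end EHSAux


/-- analogue of the Effros–Handelman–Shen argument for totally ordered
division rings.  Let `K` be a totally ordered division ring, `m, n ≥ 1`, and `M` an `m × n`
matrix with entries in `K`.  Then there exist `k ≥ 1` and a `k × m` matrix `S` over `K` such
that, for every partially ordered right `K`-vector space `E` (given by a right action
`sm : E → K → E` satisfying the right-module axioms, with translation-invariant addition and
`0 ≤ a`, `0 ≤ ξ` implying `0 ≤ aξ`) satisfying the interpolation property, the solution set
`{X ∈ M_{1,m}(E⁺) | XM ≥ 0}` equals `{YS | Y ∈ M_{1,k}(E⁺)}` (matrix inequalities are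
entrywise). -/
theorem exists_universal_generators_divisionRing
    (K : Type*) [DivisionRing K] [LinearOrder K]
    (haddK : ∀ a b : K, a ≤ b → ∀ c : K, a + c ≤ b + c)
    (hmulK : ∀ a b : K, 0 ≤ a → 0 ≤ b → 0 ≤ a * b)
    (m n : ℕ) (hm : 1 ≤ m) (hn : 1 ≤ n) (M : Matrix (Fin m) (Fin n) K) :
    ∃ (k : ℕ), 1 ≤ k ∧ ∃ S : Matrix (Fin k) (Fin m) K,
      ∀ (E : Type*) [AddCommGroup E] [PartialOrder E] (sm : E → K → E),
        (∀ (a b : E) (r : K), sm (a + b) r = sm a r + sm b r) →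
        (∀ (a : E) (r s : K), sm a (r + s) = sm a r + sm a s) →
        (∀ (a : E) (r s : K), sm a (r * s) = sm (sm a r) s) →
        (∀ a : E, sm a 1 = a) →
        (∀ a b : E, a ≤ b → ∀ c : E, a + c ≤ b + c) →
        (∀ (a : E) (r : K), 0 ≤ a → 0 ≤ r → 0 ≤ sm a r) →
        (∀ a₀ a₁ b₀ b₁ : E, a₀ ≤ b₀ → a₀ ≤ b₁ → a₁ ≤ b₀ → a₁ ≤ b₁ →
          ∃ x : E, a₀ ≤ x ∧ a₁ ≤ x ∧ x ≤ b₀ ∧ x ≤ b₁) →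
        {X : Fin m → E | (∀ i, 0 ≤ X i) ∧ ∀ j, 0 ≤ ∑ i, sm (X i) (M i j)}
          = {X : Fin m → E | ∃ Y : Fin k → E, (∀ i, 0 ≤ Y i) ∧
              X = fun j => ∑ i, sm (Y i) (S i j)} := by
  obtain ⟨k, hk, S, hS⟩ := EHSAux.master haddK hmulK n hm M
  refine ⟨k, hk, S, ?_⟩
  intro E _ _ sm h1 h2 h3 h4 h5 h6 h7
  haveI : IsOrderedAddMonoid E :=
    { add_le_add_left := h5 }
  exact hS E ⟨sm, h1, h2, h3, h4, h6, h7⟩
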